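/- arXiv:1707.04378 — 7 statements merged into one kernel-verified Lean document; each statement's English description precedes it below -/
import Mathlib

section
/- If A and B are elements of a von Neumann algebra R on a Hilbert space H with A*A ≤ λ²·B*B for some λ ≥ 0, then there exists C ∈ R with A = C·B. -/
open ContinuousLinearMap

variable {H : Type*} [NormedAddCommGroup H] [InnerProductSpace ℂ H] [CompleteSpace H]

theorem douglas_vonNeumann (R : VonNeumannAlgebra H) (A B : H →L[ℂ] H)
    (hA : A ∈ R) (hB : B ∈ R) (l : ℝ) (hl : 0 ≤ l)
    (h : adjoint A * A ≤ (l ^ 2 : ℝ) • (adjoint B * B)) :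
    ∃ C ∈ R, A = C * B := by
  classical
  -- Step 1: the norm inequality ‖A x‖ ≤ l * ‖B x‖
  have hnorm : ∀ x : H, ‖A x‖ ≤ l * ‖B x‖ := by
    intro x
    have hpos := (le_def _ _).mp h
    have h2 := hpos.2 x
    rw [reApplyInnerSelf_apply] at h2
    have heq : ((l ^ 2 : ℝ) • (adjoint B * B) - adjoint A * A) x
        = ((l ^ 2 : ℝ) : ℂ) • (adjoint B (B x)) - adjoint A (A x) := by
      simp [sub_apply, smul_apply, mul_apply, RCLike.real_smul_eq_coe_smul (K := ℂ)]
    rw [heq, inner_sub_left, inner_smul_left, map_sub, adjoint_inner_left,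
      adjoint_inner_left] at h2
    simp only [RCLike.re_to_complex] at h2
    rw [Complex.conj_ofReal, Complex.re_ofReal_mul] at h2
    have hB2 : (inner ℂ (B x) (B x)).re = ‖B x‖ ^ 2 := inner_self_eq_norm_sq (𝕜 := ℂ) _
    have hA2 : (inner ℂ (A x) (A x)).re = ‖A x‖ ^ 2 := inner_self_eq_norm_sq (𝕜 := ℂ) _
    rw [hB2, hA2] at h2
    have h3 : ‖A x‖ ^ 2 ≤ (l * ‖B x‖) ^ 2 := by rw [mul_pow]; nlinarith [h2]
    nlinarith [h3, norm_nonneg (A x), mul_nonneg hl (norm_nonneg (B x))]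
  -- well-definedness
  have hwd : ∀ x y : H, B x = B y → A x = A y := by
    intro x y hxy
    have h1 : ‖A x - A y‖ ≤ l * ‖B x - B y‖ := by
      have := hnorm (x - y); simpa [map_sub] using this
    rw [hxy, sub_self, norm_zero, mul_zero] at h1
    have h2 := le_antisymm h1 (norm_nonneg _)
    rwa [norm_eq_zero, sub_eq_zero] at h2
  -- the range of B and its closure
  set p : Submodule ℂ H := LinearMap.range (B : H →ₗ[ℂ] H) with hpdef
  have hmem : ∀ v : ↥p, ∃ x : H, B x = (v : H) := fun v => LinearMap.mem_range.mp v.2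
  -- the densely defined map g : p → H, g (B x) = A x
  let f0 : ↥p → H := fun v => A (hmem v).choose
  have f0spec : ∀ (v : ↥p) (x : H), B x = (v : H) → f0 v = A x := by
    intro v x hx
    exact hwd _ _ (((hmem v).choose_spec).trans hx.symm)
  let g : ↥p →ₗ[ℂ] H :=
    { toFun := f0
      map_add' := by
        intro v w
        have hvw : f0 (v + w) = A ((hmem v).choose + (hmem w).choose) :=
          f0spec _ _ (by rw [map_add, (hmem v).choose_spec, (hmem w).choose_spec]; rfl)
        rw [hvw, map_add]
      map_smul' := by
        intro c v
        have hcv : f0 (c • v) = A (c • (hmem v).choose) :=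
          f0spec _ _ (by rw [map_smul, (hmem v).choose_spec]; rfl)
        show f0 (c • v) = c • f0 v
        rw [hcv, map_smul] }
  have gapp : ∀ (v : ↥p) (x : H), B x = (v : H) → g v = A x := f0spec
  let g' : ↥p →L[ℂ] H := g.mkContinuous l (by
    intro v
    have h1 := hnorm (hmem v).choose
    rw [(hmem v).choose_spec] at h1
    exact h1)
  have g'app : ∀ (v : ↥p) (x : H), B x = (v : H) → g' v = A x := gapp
  -- the closure K of p
  set K : Submodule ℂ H := p.topologicalClosure with hKdef
  haveI : CompleteSpace K := p.isClosed_topologicalClosure.completeSpace_coe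
  -- the inclusion p → K
  let e : ↥p →L[ℂ] ↥K :=
    p.subtypeL.codRestrict K (fun x => p.le_topologicalClosure x.2)
  have he_iso : Isometry e := AddMonoidHomClass.isometry_of_norm e (fun x => rfl)
  have h_e : IsUniformInducing e := he_iso.isUniformInducing
  have h_dense : DenseRange e := by
    intro y
    rw [closure_subtype]
    have himg : Subtype.val '' Set.range ⇑e = (p : Set H) := by
      ext u
      constructor
      · rintro ⟨z, ⟨v, rfl⟩, rfl⟩
        exact v.2
      · intro hu
        exact ⟨e ⟨u, hu⟩, ⟨⟨u, hu⟩, rfl⟩, rfl⟩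
    rw [himg]
    have h2 : (↑y : H) ∈ (K : Set H) := y.2
    have h3 : (K : Set H) = closure (p : Set H) := p.topologicalClosure_coe
    rwa [h3] at h2

  let C0 : ↥K →L[ℂ] H := g'.extend e
  have hC0 : ∀ (v : ↥p), C0 (e v) = g' v := fun v => extend_eq g' h_dense h_e v
  let C : H →L[ℂ] H := C0.comp (K.orthogonalProjectionOnto)
  -- C (B x) = A x
  have hCB : ∀ x : H, C (B x) = A x := by
    intro x
    have hxp : B x ∈ p := LinearMap.mem_range.mpr ⟨x, rfl⟩
    have hxK : B x ∈ K := p.le_topologicalClosure hxp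
    have hproj : K.orthogonalProjectionOnto (B x) = ⟨B x, hxK⟩ :=
      Submodule.orthogonalProjectionOnto_mem_subspace_eq_self ⟨B x, hxK⟩
    have hor : e ⟨B x, hxp⟩ = (⟨B x, hxK⟩ : ↥K) := rfl
    calc C (B x) = C0 (K.orthogonalProjectionOnto (B x)) := rfl
      _ = C0 (e ⟨B x, hxp⟩) := by rw [hproj, hor]
      _ = g' ⟨B x, hxp⟩ := hC0 _
      _ = A x := g'app _ _ rfl
  -- C vanishes on Kᗮ
  have hCperp : ∀ y ∈ Kᗮ, C y = 0 := by
    intro y hy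
    have : K.orthogonalProjectionOnto y = 0 :=
      Submodule.orthogonalProjectionOnto_apply_of_mem_orthogonal hy
    show C0 (K.orthogonalProjectionOnto y) = 0
    rw [this, map_zero]
  -- operators commuting with B preserve K
  have hKinv : ∀ T : H →L[ℂ] H, (∀ x, T (B x) = B (T x)) → ∀ z ∈ K, T z ∈ K := by
    intro T hTB z hz
    have hq : IsClosed ((K.comap (T : H →ₗ[ℂ] H) : Submodule ℂ H) : Set H) := by
      have : ((K.comap (T : H →ₗ[ℂ] H) : Submodule ℂ H) : Set H) = T ⁻¹' K := rfl
      rw [this]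
      exact p.isClosed_topologicalClosure.preimage T.continuous
    have hpq : p ≤ K.comap (T : H →ₗ[ℂ] H) := by
      rintro v ⟨x, rfl⟩
      show T (B x) ∈ K
      rw [hTB x]
      exact p.le_topologicalClosure (LinearMap.mem_range.mpr ⟨T x, rfl⟩)
    exact p.topologicalClosure_minimal hpq hq hz
  -- C is in the double commutant
  have hCmem : C ∈ R := by
    rw [← R.commutant_commutant]
    rw [VonNeumannAlgebra.mem_commutant_iff]
    intro T hT
    have hTB : B * T = T * B := VonNeumannAlgebra.mem_commutant_iff.mp hT B hB
    have hTA : A * T = T * A := VonNeumannAlgebra.mem_commutant_iff.mp hT A hA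
    have hT' : adjoint T ∈ R.commutant := by
      rw [← star_eq_adjoint]; exact star_mem hT
    have hT'B : B * adjoint T = adjoint T * B :=
      VonNeumannAlgebra.mem_commutant_iff.mp hT' B hB
    -- T preserves Kᗮ
    have hTperp : ∀ w ∈ Kᗮ, T w ∈ Kᗮ := by
      intro w hw
      rw [Submodule.mem_orthogonal]
      intro u hu
      have h1 : adjoint T u ∈ K := by
        apply hKinv (adjoint T) _ u hu
        intro x
        have := congrArg (fun S => S x) hT'B
        simpa [mul_apply] using this.symm
      rw [← adjoint_inner_left]
      exact (Submodule.mem_orthogonal K w).mp hw _ h1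
    -- prove T * C = C * T by density
    have hdense : Dense ((Submodule.span ℂ ((p ⊔ Kᗮ : Submodule ℂ H) : Set H) : Submodule ℂ H) : Set H) := by
      rw [Submodule.span_eq]
      rw [Submodule.dense_iff_topologicalClosure_eq_top]
      rw [eq_top_iff]
      have h1 : K ⊔ Kᗮ = ⊤ := Submodule.sup_orthogonal_of_hasOrthogonalProjection
      rw [← h1]
      apply sup_le
      · exact Submodule.topologicalClosure_mono le_sup_left
      · exact le_trans le_sup_right (p ⊔ Kᗮ).le_topologicalClosure
    apply ContinuousLinearMap.ext_on hdense
    rintro z hz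
    have hz' : z ∈ (p ⊔ Kᗮ : Submodule ℂ H) := hz
    rw [Submodule.mem_sup] at hz'
    obtain ⟨u, hu, w, hw, rfl⟩ := hz'
    obtain ⟨x, rfl⟩ := hu
    show (T * C) (B x + w) = (C * T) (B x + w)
    have hTw : C (T w) = 0 := hCperp _ (hTperp w hw)
    have hCw : C w = 0 := hCperp w hw
    have hTBx : T (B x) = B (T x) := by
      have := congrArg (fun S => S x) hTB; simpa [mul_apply] using this.symm
    have hATx : T (A x) = A (T x) := by
      have := congrArg (fun S => S x) hTA; simpa [mul_apply] using this.symm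
    simp only [ContinuousLinearMap.mul_apply, map_add]
    rw [hCw, map_zero, add_zero, hCB x, hTBx, hCB (T x), hTw, add_zero, hATx]
  exact ⟨C, hCmem, by ext x; exact (hCB x).symm⟩
end

section
/- For A, B in a von Neumann algebra R, the left ideal R·A is contained in R·B if and only if A*A ≤ λ²·B*B for some λ ≥ 0. -/
open ContinuousLinearMap
open scoped InnerProductSpace

variable {H : Type*} [NormedAddCommGroup H] [InnerProductSpace ℂ H] [CompleteSpace H]

private lemma maj_iff (A B : H →L[ℂ] H) (l : ℝ) (hl : 0 ≤ l) :
    adjoint A * A ≤ (l ^ 2 : ℝ) • (adjoint B * B) ↔ ∀ x, ‖A x‖ ≤ l * ‖B x‖ := by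
  have key : ∀ x : H, ((l ^ 2 : ℝ) • (adjoint B * B) - adjoint A * A).reApplyInnerSelf x
      = l ^ 2 * ‖B x‖ ^ 2 - ‖A x‖ ^ 2 := by
    intro x
    have hA : ⟪(adjoint A * A) x, x⟫_ℂ = ⟪A x, A x⟫_ℂ := by
      simp [mul_apply, adjoint_inner_left]
    have hB : ⟪(adjoint B * B) x, x⟫_ℂ = ⟪B x, B x⟫_ℂ := by
      simp [mul_apply, adjoint_inner_left]
    simp only [reApplyInnerSelf_apply, sub_apply, smul_apply, inner_sub_left,
      inner_smul_real_left, map_sub]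
    rw [RCLike.real_smul_eq_coe_smul (K := ℂ), inner_smul_real_left, hA, hB, RCLike.smul_re]
    simp [inner_self_eq_norm_sq]
    rw [← Complex.ofReal_pow, ← Complex.ofReal_pow, Complex.ofReal_re, Complex.ofReal_re]
  have hsa : IsSelfAdjoint ((l ^ 2 : ℝ) • (adjoint B * B) - adjoint A * A) := by
    have h1 : IsSelfAdjoint (adjoint A * A) := by
      rw [IsSelfAdjoint, star_mul, star_eq_adjoint, star_eq_adjoint, adjoint_adjoint]
    have h2 : IsSelfAdjoint (adjoint B * B) := by
      rw [IsSelfAdjoint, star_mul, star_eq_adjoint, star_eq_adjoint, adjoint_adjoint]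
    exact (IsSelfAdjoint.all (l ^ 2 : ℝ)).smul h2 |>.sub h1
  constructor
  · intro hle x
    rw [le_def] at hle
    have h2 := hle.2 x
    rw [key] at h2
    have hsq : ‖A x‖ ^ 2 ≤ (l * ‖B x‖) ^ 2 := by nlinarith
    exact le_of_pow_le_pow_left₀ two_ne_zero (mul_nonneg hl (norm_nonneg _)) hsq
  · intro h
    rw [le_def]
    refine ⟨hsa.isSymmetric, fun x => ?_⟩
    rw [key]
    nlinarith [h x, norm_nonneg (A x), norm_nonneg (B x)]

private lemma douglas_exists (A B : H →L[ℂ] H) (l : ℝ)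
    (h : ∀ x, ‖A x‖ ≤ l * ‖B x‖) :
    ∃ C : H →L[ℂ] H, (∀ x, C (B x) = A x) ∧
      ∀ z ∈ ((LinearMap.range (B : H →ₗ[ℂ] H)).topologicalClosure)ᗮ, C z = 0 := by
  set Bl : H →ₗ[ℂ] H := (B : H →ₗ[ℂ] H) with hBl
  have hker : LinearMap.ker Bl ≤ LinearMap.ker (A : H →ₗ[ℂ] H) := by
    intro x hx
    rw [LinearMap.mem_ker] at hx ⊢
    have hx' : B x = 0 := hx
    have := h x
    rw [hx'] at this
    simp only [norm_zero, mul_zero] at this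
    exact norm_le_zero_iff.mp this
  let Abar : (H ⧸ LinearMap.ker Bl) →ₗ[ℂ] H := (LinearMap.ker Bl).liftQ (A : H →ₗ[ℂ] H) hker
  let C₀l : ↥(LinearMap.range Bl) →ₗ[ℂ] H := Abar ∘ₗ (Bl.quotKerEquivRange.symm : ↥(LinearMap.range Bl) →ₗ[ℂ] (H ⧸ LinearMap.ker Bl))
  have hC₀l : ∀ x : H, C₀l ⟨B x, LinearMap.mem_range_self Bl x⟩ = A x := by
    intro x
    have h1 : Bl.quotKerEquivRange.symm ⟨Bl x, LinearMap.mem_range_self Bl x⟩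
        = (LinearMap.ker Bl).mkQ x := Bl.quotKerEquivRange_symm_apply_image x _
    simp only [C₀l, LinearMap.comp_apply, LinearEquiv.coe_coe]
    rw [show (⟨B x, LinearMap.mem_range_self Bl x⟩ : ↥(LinearMap.range Bl))
        = ⟨Bl x, LinearMap.mem_range_self Bl x⟩ from rfl, h1]
    simp [Abar, Submodule.mkQ_apply, Submodule.liftQ_apply]
  have hbound : ∀ y : ↥(LinearMap.range Bl), ‖C₀l y‖ ≤ l * ‖y‖ := by
    rintro ⟨y, hy⟩
    obtain ⟨x, rfl⟩ := hy
    rw [show (⟨Bl x, _⟩ : ↥(LinearMap.range Bl)) = ⟨B x, LinearMap.mem_range_self Bl x⟩ from rfl,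
      hC₀l x]
    exact h x
  let C₀ : ↥(LinearMap.range Bl) →L[ℂ] H := C₀l.mkContinuous l hbound
  set K : Submodule ℂ H := (LinearMap.range Bl).topologicalClosure with hK
  haveI : CompleteSpace K := (Submodule.isClosed_topologicalClosure _).completeSpace_coe
  let e : ↥(LinearMap.range Bl) →L[ℂ] K :=
    { toLinearMap := Submodule.inclusion (Submodule.le_topologicalClosure _)
      cont := continuous_induced_rng.2 continuous_subtype_val }
  have h_iso : Isometry (⇑e) :=
    Isometry.of_dist_eq fun x y => (rfl : dist (e x) (e y) = dist x y)
  have h_e : IsUniformInducing (⇑e) := h_iso.isUniformInducing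
  have h_dense : DenseRange e := by
    intro z
    rw [closure_subtype]
    have himg : Subtype.val '' (Set.range e) = (LinearMap.range Bl : Set H) := by
      ext w
      constructor
      · rintro ⟨w', ⟨u, rfl⟩, rfl⟩; exact u.2
      · intro hw; exact ⟨e ⟨w, hw⟩, ⟨⟨w, hw⟩, rfl⟩, rfl⟩
    rw [himg]
    have hz := z.2
    rwa [hK, ← Submodule.topologicalClosure_coe] at *
  let Cbar : K →L[ℂ] H := C₀.extend e
  let C : H →L[ℂ] H := Cbar.comp (K.orthogonalProjectionOnto)
  refine ⟨C, ?_, ?_⟩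
  · intro x
    have hmem : B x ∈ K := Submodule.le_topologicalClosure _ (LinearMap.mem_range_self Bl x)
    have hproj : K.orthogonalProjectionOnto (B x) = e ⟨B x, LinearMap.mem_range_self Bl x⟩ := by
      have h0 : (B x) = ((e ⟨B x, LinearMap.mem_range_self Bl x⟩ : K) : H) := rfl
      conv_lhs => rw [h0]
      exact Submodule.orthogonalProjectionOnto_mem_subspace_eq_self _
    show Cbar (K.orthogonalProjectionOnto (B x)) = A x
    rw [hproj]
    show C₀.extend e (e _) = A x
    rw [ContinuousLinearMap.extend_eq _ h_dense h_e]
    show C₀l _ = A x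
    exact hC₀l x
  · intro z hz
    show Cbar (K.orthogonalProjectionOnto z) = 0
    rw [Submodule.orthogonalProjectionOnto_apply_of_mem_orthogonal hz]
    simp

theorem leftIdeal_subset_iff_majorization (R : VonNeumannAlgebra H) (A B : H →L[ℂ] H)
    (hA : A ∈ R) (hB : B ∈ R) :
    (fun T => T * A) '' (R : Set (H →L[ℂ] H)) ⊆ (fun T => T * B) '' (R : Set (H →L[ℂ] H)) ↔
      ∃ l : ℝ, 0 ≤ l ∧ adjoint A * A ≤ (l ^ 2 : ℝ) • (adjoint B * B) := by
  constructor
  · intro h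
    have hAmem : A ∈ (fun T => T * A) '' (R : Set (H →L[ℂ] H)) :=
      ⟨1, R.one_mem, one_mul A⟩
    obtain ⟨T, hT, hTB⟩ := h hAmem
    refine ⟨‖T‖, norm_nonneg T, (maj_iff A B ‖T‖ (norm_nonneg T)).mpr fun x => ?_⟩
    have : A x = T (B x) := by rw [← hTB]; rfl
    rw [this]
    exact T.le_opNorm (B x)
  · rintro ⟨l, hl, hle⟩
    have hAB : ∀ x, ‖A x‖ ≤ l * ‖B x‖ := (maj_iff A B l hl).mp hle
    obtain ⟨C, hCB, hC0⟩ := douglas_exists A B l hAB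
    set K : Submodule ℂ H := (LinearMap.range (B : H →ₗ[ℂ] H)).topologicalClosure with hK
    -- C is in R
    have hCR : C ∈ R := by
      have hcc : C ∈ Set.centralizer (Set.centralizer (R : Set (H →L[ℂ] H))) := by
        rw [Set.mem_centralizer_iff]
        intro S hSmem
        have hS := Set.mem_centralizer_iff.mp hSmem
        have hSA : ∀ x, A (S x) = S (A x) := fun x =>
          congrFun (congrArg DFunLike.coe (hS A hA)) x
        have hSB : ∀ x, B (S x) = S (B x) := fun x =>
          congrFun (congrArg DFunLike.coe (hS B hB)) x
        have hSstar : ∀ T' ∈ (R : Set (H →L[ℂ] H)), T' * star S = star S * T' := by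
          intro T' hT'
          have h1 := hS (star T') (star_mem hT')
          calc T' * star S = star (S * star T') := by simp [star_mul]
            _ = star (star T' * S) := by rw [h1]
            _ = star S * T' := by simp [star_mul]
        have hSstarB : ∀ x, B (star S x) = star S (B x) := fun x =>
          congrFun (congrArg DFunLike.coe (hSstar B hB)) x
        have mapsK : ∀ (T' : H →L[ℂ] H), (∀ x, B (T' x) = T' (B x)) → ∀ z ∈ K, T' z ∈ K := by
          intro T' hT' z hz
          have hz' : z ∈ closure (LinearMap.range (B : H →ₗ[ℂ] H) : Set H) := hz
          have : T' z ∈ closure (LinearMap.range (B : H →ₗ[ℂ] H) : Set H) := by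
            refine map_mem_closure T'.continuous hz' ?_
            rintro w ⟨x, rfl⟩
            exact ⟨T' x, by exact_mod_cast hT' x⟩
          exact this
        have mapsKperp : ∀ z ∈ Kᗮ, S z ∈ Kᗮ := by
          intro z hz
          rw [Submodule.mem_orthogonal]
          intro v hv
          have : ⟪adjoint S v, z⟫_ℂ = ⟪v, S z⟫_ℂ := adjoint_inner_left S z v
          rw [← this]
          have hSv : adjoint S v ∈ K := by
            rw [← star_eq_adjoint]
            exact mapsK (star S) (fun x => (hSstarB x)) v hv
          exact (Submodule.mem_orthogonal K z).mp hz _ hSv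
        -- density: C ∘ S = S ∘ C on K
        have hdense : ∀ z ∈ (K : Set H), C (S z) = S (C z) := by
          intro z hz
          have hcl : (K : Set H) ⊆ {w : H | C (S w) = S (C w)} := by
            have hclosed : IsClosed {w : H | C (S w) = S (C w)} :=
              isClosed_eq (C.continuous.comp S.continuous) (S.continuous.comp C.continuous)
            refine closure_minimal ?_ hclosed
            rintro w ⟨x, rfl⟩
            show C (S (B x)) = S (C (B x))
            have : (B : H →ₗ[ℂ] H) x = B x := rfl
            rw [this] at *
            rw [← hSB x, hCB (S x), hCB x, hSA x]
          exact hcl hz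
        ext x
        set px : H := (K.orthogonalProjectionOnto x : H) with hpx
        have hxp : x - px ∈ Kᗮ := K.sub_starProjection_mem_orthogonal x
        have hpxK : px ∈ K := (K.orthogonalProjectionOnto x).2
        have hCx : C x = C px := by
          have : C x = C px + C (x - px) := by rw [← map_add]; congr 1; abel
          rw [this, hC0 _ hxp, add_zero]
        have hCSx : C (S x) = C (S px) := by
          have h1 : S x = S px + S (x - px) := by rw [← map_add]; congr 1; abel
          rw [h1, map_add, hC0 _ (mapsKperp _ hxp), add_zero]
        show S (C x) = C (S x)
        rw [hCx, hCSx, ← hdense px hpxK]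
      rw [R.centralizer_centralizer] at hcc
      exact hcc
    -- conclude
    rintro X ⟨T, hT, rfl⟩
    refine ⟨T * C, mul_mem hT hCR, ?_⟩
    ext x
    show (T * C) (B x) = T (A x)
    show T (C (B x)) = T (A x)
    rw [hCB x]
end

section
/- For operators A₁, A₂ in a von Neumann algebra R, the sum of principal left ideals satisfies R·A₁ + R·A₂ = R·√(A₁*A₁ + A₂*A₂). Hence every finitely generated left ideal of R is principal. -/
open ContinuousLinearMap Pointwise

set_option synthInstance.maxHeartbeats 1000000
set_option maxHeartbeats 1000000

variable {H : Type*} [NormedAddCommGroup H] [InnerProductSpace ℂ H] [CompleteSpace H]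

open StarAlgebra in
private lemma vNA_commute_of_mem_elemental {T a x : H →L[ℂ] H} (h : Commute T a)
    (h' : Commute T (star a)) (hx : x ∈ elemental ℂ a) : Commute T x := by
  induction hx using elemental.induction_on with
  | self => exact h
  | star_self => exact h'
  | algebraMap r => exact Algebra.commute_algebraMap_right r T
  | add u hu v hv hu' hv' => exact hu'.add_right hv'
  | mul u hu v hv hu' hv' => exact hu'.mul_right hv'
  | closure s hs hcomm v hv =>
      have hcl : IsClosed {u : H →L[ℂ] H | Commute T u} := by
        simpa [Commute, SemiconjBy] using isClosed_eq (by fun_prop) (by fun_prop)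
      exact closure_minimal (fun u hu => hcomm u hu) hcl hv

open StarAlgebra in
private lemma vNA_commute_cfc_c {T a : H →L[ℂ] H} (ha : IsStarNormal a) (h : Commute T a)
    (h' : Commute T (star a)) (f : ℂ → ℂ) : Commute T (cfc f a) := by
  by_cases hf : ContinuousOn f (spectrum ℂ a)
  · rw [cfc_apply f a ha hf]
    refine vNA_commute_of_mem_elemental h h' ?_
    rw [cfcHom_eq_of_isStarNormal]
    exact Subtype.coe_prop _
  · rw [cfc_apply_of_not_continuousOn a hf]; exact Commute.zero_right T

private lemma vNA_commute_sqrt {T S : H →L[ℂ] H} (hS : 0 ≤ S) (h : Commute T S) :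
    Commute T (CFC.sqrt S) := by
  have hsa : IsSelfAdjoint S := IsSelfAdjoint.of_nonneg hS
  rw [CFC.sqrt_eq_cfc, cfc_nnreal_eq_real _ _ hS, cfc_real_eq_complex _ hsa]
  exact vNA_commute_cfc_c hsa.isStarNormal h (by rwa [hsa.star_eq]) _

/-- Given `‖A x‖ ≤ ‖B x‖` for all `x`, there is `V` with `V ∘ B = A` and `V = 0` on
`(range B)ᗮ`. -/
private lemma vNA_exists_factor (A B : H →L[ℂ] H) (h : ∀ x, ‖A x‖ ≤ ‖B x‖) :
    ∃ V : H →L[ℂ] H, (∀ x, V (B x) = A x) ∧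
      (∀ y, y ∈ (LinearMap.range (B : H →ₗ[ℂ] H))ᗮ → V y = 0) := by
  classical
  set D : Submodule ℂ H := LinearMap.range (B : H →ₗ[ℂ] H) with hD
  have hker : LinearMap.ker (B : H →ₗ[ℂ] H) ≤ LinearMap.ker (A : H →ₗ[ℂ] H) := by
    intro x hx
    simp only [LinearMap.mem_ker] at hx ⊢
    have := h x
    rw [show (B : H →ₗ[ℂ] H) x = B x from rfl] at hx
    rw [hx, norm_zero] at this
    exact norm_le_zero_iff.mp (by simpa using this)
  let e := LinearMap.quotKerEquivRange (B : H →ₗ[ℂ] H)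
  let φ₁ : D →ₗ[ℂ] H := ((LinearMap.ker (B : H →ₗ[ℂ] H)).liftQ (A : H →ₗ[ℂ] H) hker).comp
    (e.symm : D →ₗ[ℂ] H ⧸ LinearMap.ker (B : H →ₗ[ℂ] H))
  have hφ₁ : ∀ x : H, φ₁ ⟨B x, ⟨x, rfl⟩⟩ = A x := by
    intro x
    have he : e (Submodule.Quotient.mk x) = ⟨B x, ⟨x, rfl⟩⟩ := by
      apply Subtype.ext
      simp [e, LinearMap.quotKerEquivRange]
    simp [φ₁, ← he]
  have hφ₁n : ∀ y : D, ‖φ₁ y‖ ≤ 1 * ‖y‖ := by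
    rintro ⟨y, x, rfl⟩
    rw [one_mul]
    rw [show (⟨(B : H →ₗ[ℂ] H) x, _⟩ : D) = ⟨B x, ⟨x, rfl⟩⟩ from rfl, hφ₁]
    simpa using h x
  let φ₂ : D →L[ℂ] H := φ₁.mkContinuous 1 hφ₁n
  set K : Submodule ℂ H := D.topologicalClosure with hK
  let ι₀ : D →ₗ[ℂ] K := Submodule.inclusion (Submodule.le_topologicalClosure D)
  let ι : D →L[ℂ] K := ι₀.mkContinuous 1 (by intro y; rw [one_mul]; exact le_of_eq rfl)
  have hui : IsUniformInducing ι := by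
    have : Isometry ι := by
      intro y z
      simp only [edist_eq_enorm_sub]
      rfl
    exact this.isUniformInducing
  have hdense : DenseRange ι := by
    refine (Topology.IsInducing.subtypeVal (t := fun x => x ∈ K)).dense_iff.2 fun x => ?_
    convert show (x : H) ∈ closure (D : Set H) from x.prop
    rw [← Set.range_comp]
    exact Set.ext fun y => ⟨by rintro ⟨y, rfl⟩; exact y.prop, fun hy => ⟨⟨y, hy⟩, rfl⟩⟩
  let ψ : K →L[ℂ] H := φ₂.extend ι
  have hψ : ∀ y : D, ψ (ι y) = φ₂ y := fun y => ContinuousLinearMap.extend_eq φ₂ hdense hui y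
  haveI : CompleteSpace K := D.isClosed_topologicalClosure.completeSpace_coe
  let V : H →L[ℂ] H := ψ.comp (K.orthogonalProjectionOnto)
  refine ⟨V, fun x => ?_, fun y hy => ?_⟩
  · have hmem : B x ∈ K := Submodule.le_topologicalClosure D ⟨x, rfl⟩
    have hproj : K.orthogonalProjectionOnto (B x) = ⟨B x, hmem⟩ := by
      apply Subtype.ext
      exact Submodule.starProjection_eq_self_iff.mpr hmem
    have : V (B x) = ψ ⟨B x, hmem⟩ := by simp [V, hproj]
    rw [this, show (⟨B x, hmem⟩ : K) = ι ⟨B x, ⟨x, rfl⟩⟩ from rfl, hψ]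
    show φ₁ _ = _
    exact hφ₁ x
  · have hyK : y ∈ Kᗮ := by
      intro u hu
      have hcl : IsClosed {u : H | inner (𝕜 := ℂ) u y = 0} :=
        isClosed_eq (continuous_id.inner continuous_const) continuous_const
      have : (D : Set H) ⊆ {u : H | inner (𝕜 := ℂ) u y = 0} := fun u hu => hy u hu
      exact closure_minimal this hcl hu
    have : K.orthogonalProjectionOnto y = 0 :=
      Submodule.orthogonalProjectionOnto_apply_of_mem_orthogonal hyK
    simp [V, this]

private lemma vNA_ext_on_range (B : H →L[ℂ] H) (f g : H →L[ℂ] H)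
    (h1 : ∀ x, f (B x) = g (B x))
    (h2 : ∀ y ∈ (LinearMap.range (B : H →ₗ[ℂ] H))ᗮ, f y = g y) : f = g := by
  set D : Submodule ℂ H := LinearMap.range (B : H →ₗ[ℂ] H) with hD
  set K : Submodule ℂ H := D.topologicalClosure with hK
  haveI : CompleteSpace K := D.isClosed_topologicalClosure.completeSpace_coe
  ext x
  obtain ⟨k, hk, z, hz, rfl⟩ := K.exists_add_mem_mem_orthogonal x
  have hfk : f k = g k := by
    have hcl : IsClosed {u : H | f u = g u} := isClosed_eq f.continuous g.continuous
    have hsub : (D : Set H) ⊆ {u : H | f u = g u} := by rintro u ⟨w, rfl⟩; exact h1 w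
    exact closure_minimal hsub hcl hk
  have hDz : z ∈ Dᗮ := (Submodule.orthogonal_le (Submodule.le_topologicalClosure D)) hz
  simp [map_add, hfk, h2 z hDz]

private lemma vNA_mem_orthogonal_range_iff {B : H →L[ℂ] H} (hB : IsSelfAdjoint B) (y : H) :
    y ∈ (LinearMap.range (B : H →ₗ[ℂ] H))ᗮ ↔ B y = 0 := by
  rw [Submodule.mem_orthogonal]
  constructor
  · intro hy
    apply ext_inner_left ℂ
    intro v
    have h := hy (B v) ⟨v, rfl⟩
    have h2 : (inner ℂ (B v) y : ℂ) = inner ℂ v (B y) := by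
      rw [show B v = (adjoint B) v by rw [hB.adjoint_eq]]
      exact ContinuousLinearMap.adjoint_inner_left B y v
    rw [inner_zero_right]
    rw [h2] at h
    exact h
  · rintro h0 v ⟨w, rfl⟩
    show (inner ℂ (B w) y : ℂ) = 0
    have h2 : (inner ℂ (B w) y : ℂ) = inner ℂ w (B y) := by
      rw [show B w = (adjoint B) w by rw [hB.adjoint_eq]]
      exact ContinuousLinearMap.adjoint_inner_left B y w
    rw [h2, h0, inner_zero_right]

private lemma vNA_key (R : VonNeumannAlgebra H) (A₁ A₂ : H →L[ℂ] H)
    (h₁ : A₁ ∈ R) (h₂ : A₂ ∈ R) :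
    CFC.sqrt (adjoint A₁ * A₁ + adjoint A₂ * A₂) ∈ R ∧
    ((fun T => T * A₁) '' (R : Set (H →L[ℂ] H)) + (fun T => T * A₂) '' (R : Set (H →L[ℂ] H)) =
      (fun T => T * CFC.sqrt (adjoint A₁ * A₁ + adjoint A₂ * A₂)) '' (R : Set (H →L[ℂ] H))) := by
  classical
  set S : H →L[ℂ] H := adjoint A₁ * A₁ + adjoint A₂ * A₂ with hSdef
  have hS : (0 : H →L[ℂ] H) ≤ S := by
    rw [hSdef]
    have e1 : adjoint A₁ * A₁ = star A₁ * A₁ := by rw [star_eq_adjoint]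
    have e2 : adjoint A₂ * A₂ = star A₂ * A₂ := by rw [star_eq_adjoint]
    rw [e1, e2]
    exact add_nonneg (star_mul_self_nonneg A₁) (star_mul_self_nonneg A₂)
  set B : H →L[ℂ] H := CFC.sqrt S with hBdef
  have hBnn : (0 : H →L[ℂ] H) ≤ B := CFC.sqrt_nonneg (a := S)
  have hBsa : IsSelfAdjoint B := IsSelfAdjoint.of_nonneg hBnn
  have hSsa : IsSelfAdjoint S := IsSelfAdjoint.of_nonneg hS
  have hB2 : B * B = S := by
    have := CFC.sq_sqrt S hS
    rwa [sq] at this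
  -- membership of S and B in R
  have hSmem : S ∈ R := by
    rw [hSdef]
    have : adjoint A₁ = star A₁ := (star_eq_adjoint A₁).symm
    exact add_mem (mul_mem (this ▸ star_mem h₁) h₁)
      (mul_mem ((star_eq_adjoint A₂).symm ▸ star_mem h₂) h₂)
  have hBmem : B ∈ R := by
    have : B ∈ Set.centralizer (Set.centralizer (R : Set (H →L[ℂ] H))) := by
      intro T hT
      have hc : Commute T S := (hT S hSmem).symm
      exact vNA_commute_sqrt hS hc
    rwa [R.centralizer_centralizer] at this
  -- pointwise norm identity
  have hnorm : ∀ x : H, ‖A₁ x‖ ^ 2 + ‖A₂ x‖ ^ 2 = ‖B x‖ ^ 2 := by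
    intro x
    have e1 : (inner ℂ x (S x) : ℂ) = inner ℂ (A₁ x) (A₁ x) + inner ℂ (A₂ x) (A₂ x) := by
      rw [hSdef]
      simp only [ContinuousLinearMap.add_apply, ContinuousLinearMap.mul_apply, inner_add_right]
      rw [ContinuousLinearMap.adjoint_inner_right, ContinuousLinearMap.adjoint_inner_right]
    have e2 : (inner ℂ x (S x) : ℂ) = inner ℂ (B x) (B x) := by
      conv_lhs => rw [← hB2]
      rw [ContinuousLinearMap.mul_apply]
      rw [show (inner ℂ x (B (B x)) : ℂ) = inner ℂ ((adjoint B) x) (B x) from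
        (ContinuousLinearMap.adjoint_inner_left B (B x) x).symm]
      rw [hBsa.adjoint_eq]
    have e3 : (inner ℂ (A₁ x) (A₁ x) : ℂ) + inner ℂ (A₂ x) (A₂ x) = inner ℂ (B x) (B x) := by
      rw [← e1, ← e2]
    rw [inner_self_eq_norm_sq_to_K, inner_self_eq_norm_sq_to_K, inner_self_eq_norm_sq_to_K] at e3
    exact_mod_cast e3
  have hle₁ : ∀ x : H, ‖A₁ x‖ ≤ ‖B x‖ := by
    intro x
    have := hnorm x
    nlinarith [norm_nonneg (A₁ x), norm_nonneg (A₂ x), norm_nonneg (B x), sq_nonneg (‖A₂ x‖)]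
  have hle₂ : ∀ x : H, ‖A₂ x‖ ≤ ‖B x‖ := by
    intro x
    have := hnorm x
    nlinarith [norm_nonneg (A₁ x), norm_nonneg (A₂ x), norm_nonneg (B x)]
  obtain ⟨V₁, hV₁B, hV₁0⟩ := vNA_exists_factor A₁ B hle₁
  obtain ⟨V₂, hV₂B, hV₂0⟩ := vNA_exists_factor A₂ B hle₂
  -- V i ∈ R
  have hVmem : ∀ (V A : H →L[ℂ] H), A ∈ R → (∀ x, V (B x) = A x) →
      (∀ y, y ∈ (LinearMap.range (B : H →ₗ[ℂ] H))ᗮ → V y = 0) → V ∈ R := by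
    intro V A hA hVB hV0
    have : V ∈ Set.centralizer (Set.centralizer (R : Set (H →L[ℂ] H))) := by
      intro T hT
      have hTB : Commute T B := by
        have hc : Commute T S := (hT S hSmem).symm
        exact vNA_commute_sqrt hS hc
      have hTA : Commute T A := (hT A hA).symm
      have hTBx : ∀ z, T (B z) = B (T z) := fun z => by
        simpa [ContinuousLinearMap.mul_apply] using ContinuousLinearMap.ext_iff.mp hTB.eq z
      have hTAx : ∀ z, T (A z) = A (T z) := fun z => by
        simpa [ContinuousLinearMap.mul_apply] using ContinuousLinearMap.ext_iff.mp hTA.eq z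
      have : T * V = V * T := by
        apply vNA_ext_on_range B
        · intro x
          show T (V (B x)) = V (T (B x))
          rw [hVB x, hTBx x, hVB (T x)]
          exact hTAx x
        · intro y hy
          show T (V y) = V (T y)
          rw [hV0 y hy, map_zero]
          have hTy : T y ∈ (LinearMap.range (B : H →ₗ[ℂ] H))ᗮ := by
            rw [vNA_mem_orthogonal_range_iff hBsa] at hy ⊢
            rw [← hTBx y, hy, map_zero]
          rw [hV0 _ hTy]
      exact this
    rwa [R.centralizer_centralizer] at this
  have hV₁mem : V₁ ∈ R := hVmem V₁ A₁ h₁ hV₁B hV₁0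
  have hV₂mem : V₂ ∈ R := hVmem V₂ A₂ h₂ hV₂B hV₂0
  -- V i * B = A i
  have hV₁Bop : V₁ * B = A₁ := by ext x; exact hV₁B x
  have hV₂Bop : V₂ * B = A₂ := by ext x; exact hV₂B x
  -- adjoint A₁ * V₁ + adjoint A₂ * V₂ = B
  have hC : adjoint A₁ * V₁ + adjoint A₂ * V₂ = B := by
    apply vNA_ext_on_range B
    · intro x
      show adjoint A₁ (V₁ (B x)) + adjoint A₂ (V₂ (B x)) = B (B x)
      rw [hV₁B x, hV₂B x]
      have : B (B x) = S x := by rw [← hB2]; rfl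
      rw [this, hSdef]
      rfl
    · intro y hy
      show adjoint A₁ (V₁ y) + adjoint A₂ (V₂ y) = B y
      rw [hV₁0 y hy, hV₂0 y hy, map_zero, map_zero,
        (vNA_mem_orthogonal_range_iff hBsa y).mp hy, add_zero]
  have hBsum : adjoint V₁ * A₁ + adjoint V₂ * A₂ = B := by
    have h := congrArg star hC
    simp only [star_add, star_mul, star_eq_adjoint, adjoint_adjoint, hBsa.adjoint_eq] at h
    exact h
  refine ⟨hBmem, ?_⟩
  apply Set.eq_of_subset_of_subset
  · rintro x hx
    rw [Set.mem_add] at hx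
    obtain ⟨u, ⟨T₁, hT₁, rfl⟩, v, ⟨T₂, hT₂, rfl⟩, rfl⟩ := hx
    refine ⟨T₁ * V₁ + T₂ * V₂, ?_, ?_⟩
    · exact add_mem (mul_mem hT₁ hV₁mem) (mul_mem hT₂ hV₂mem)
    · show (T₁ * V₁ + T₂ * V₂) * B = T₁ * A₁ + T₂ * A₂
      rw [add_mul, mul_assoc, mul_assoc, hV₁Bop, hV₂Bop]
  · rintro x ⟨T, hT, rfl⟩
    rw [Set.mem_add]
    refine ⟨(T * adjoint V₁) * A₁, ⟨T * adjoint V₁, ?_, rfl⟩,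
      (T * adjoint V₂) * A₂, ⟨T * adjoint V₂, ?_, rfl⟩, ?_⟩
    · exact mul_mem hT (by rw [← star_eq_adjoint]; exact star_mem hV₁mem)
    · exact mul_mem hT (by rw [← star_eq_adjoint]; exact star_mem hV₂mem)
    · show T * adjoint V₁ * A₁ + T * adjoint V₂ * A₂ = T * B
      rw [mul_assoc, mul_assoc, ← mul_add, hBsum]

theorem leftIdeal_add_leftIdeal (R : VonNeumannAlgebra H) (A₁ A₂ : H →L[ℂ] H)
    (h₁ : A₁ ∈ R) (h₂ : A₂ ∈ R) :
    ((fun T => T * A₁) '' (R : Set (H →L[ℂ] H)) + (fun T => T * A₂) '' (R : Set (H →L[ℂ] H)) =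
      (fun T => T * CFC.sqrt (adjoint A₁ * A₁ + adjoint A₂ * A₂)) '' (R : Set (H →L[ℂ] H))) ∧
    ∀ (n : ℕ) (A : Fin n → H →L[ℂ] H), (∀ i, A i ∈ R) →
      ∃ B ∈ R, (∑ i, (fun T => T * A i) '' (R : Set (H →L[ℂ] H))) =
        (fun T => T * B) '' (R : Set (H →L[ℂ] H)) := by
  refine ⟨(vNA_key R A₁ A₂ h₁ h₂).2, ?_⟩
  intro n
  induction n with
  | zero =>
      intro A hA
      refine ⟨0, zero_mem _, ?_⟩
      rw [Finset.univ_eq_empty, Finset.sum_empty]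
      ext x
      constructor
      · rintro rfl
        exact ⟨0, zero_mem _, by simp⟩
      · rintro ⟨T, hT, rfl⟩
        simp
  | succ n ih =>
      intro A hA
      obtain ⟨B', hB'mem, hB'⟩ := ih (fun i => A i.succ) (fun i => hA i.succ)
      obtain ⟨hBmem, hBeq⟩ := vNA_key R (A 0) B' (hA 0) hB'mem
      refine ⟨CFC.sqrt (adjoint (A 0) * A 0 + adjoint B' * B'), hBmem, ?_⟩
      rw [Fin.sum_univ_succ, hB', hBeq]
end

section
/- Let X = {0} ∪ {1/n : n ∈ ℕ, n ≥ 1} with the subspace topology from ℝ, let g(x) = x, and let f(x) = x when x = 1/(2n) for some n ≥ 1 and f(x) = 0 otherwise. Then f and g are continuous, f² ≤ g², yet there is no continuous function h : X → ℂ with f = h·g. -/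
open scoped Classical

/-- The compact space `{0} ∪ {1/n : n ≥ 1}` as a subset of `ℝ`. -/
def Xset : Set ℝ := {0} ∪ {x : ℝ | ∃ n : ℕ, 1 ≤ n ∧ x = 1 / n}

lemma Xset.inv_mem (n : ℕ) (hn : 1 ≤ n) : (1 / (n : ℝ)) ∈ Xset :=
  Or.inr ⟨n, hn, rfl⟩

lemma Xset.zero_mem : (0 : ℝ) ∈ Xset := Or.inl rfl

/-- separation: points of `Xset` near `1/n` equal `1/n`. -/
lemma Xset.sep (n : ℕ) (hn : 1 ≤ n) (y : ℝ) (hy : y ∈ Xset)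
    (hclose : |y - 1 / n| < 1 / (n * (n + 1))) : y = 1 / n := by
  have hn0 : (0 : ℝ) < n := by exact_mod_cast hn
  have hn1 : (0 : ℝ) < (n : ℝ) + 1 := by linarith
  rcases hy with hy | ⟨m, hm, rfl⟩
  · exfalso
    simp only [Set.mem_singleton_iff] at hy
    subst hy
    rw [zero_sub, abs_neg, abs_of_pos (by positivity)] at hclose
    have : 1 / ((n : ℝ) * (n + 1)) ≤ 1 / n := by
      apply one_div_le_one_div_of_le hn0
      nlinarith
    linarith
  · have hm0 : (0 : ℝ) < m := by exact_mod_cast hm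
    rcases lt_trichotomy m n with h | h | h
    · exfalso
      -- m < n : 1/m - 1/n ≥ 1/(m(m+1)) ≥ 1/(n(n+1))
      have hmn : (m : ℝ) + 1 ≤ n := by exact_mod_cast h
      have h1 : 1 / (n : ℝ) ≤ 1 / ((m : ℝ) + 1) :=
        one_div_le_one_div_of_le (by linarith) hmn
      have h2 : 1 / (m : ℝ) - 1 / ((m : ℝ) + 1) = 1 / ((m : ℝ) * (m + 1)) := by
        rw [div_sub_div _ _ (ne_of_gt hm0) (by linarith)]
        ring_nf
      have h3 : 1 / ((n : ℝ) * (n + 1)) ≤ 1 / ((m : ℝ) * (m + 1)) := by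
        apply one_div_le_one_div_of_le (by positivity)
        nlinarith
      have h4 : 1 / ((n : ℝ) * (n + 1)) ≤ 1 / (m : ℝ) - 1 / n := by linarith
      have h5 : 1 / (m : ℝ) - 1 / n ≤ |1 / (m : ℝ) - 1 / n| := le_abs_self _
      linarith
    · exact_mod_cast congrArg (fun k : ℕ => 1 / (k : ℝ)) h
    · exfalso
      -- n < m : 1/n - 1/m ≥ 1/(n(n+1))
      have hmn : (n : ℝ) + 1 ≤ m := by exact_mod_cast h
      have h1 : 1 / (m : ℝ) ≤ 1 / ((n : ℝ) + 1) :=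
        one_div_le_one_div_of_le (by linarith) hmn
      have h2 : 1 / (n : ℝ) - 1 / ((n : ℝ) + 1) = 1 / ((n : ℝ) * (n + 1)) := by
        rw [div_sub_div _ _ (ne_of_gt hn0) (by linarith)]
        ring_nf
      have h4 : 1 / ((n : ℝ) * (n + 1)) ≤ 1 / (n : ℝ) - 1 / m := by linarith
      have h5 : 1 / (n : ℝ) - 1 / m ≤ |1 / (m : ℝ) - 1 / n| := by
        rw [abs_sub_comm]
        exact le_abs_self _
      linarith

/-- Every nonzero point of `Xset` is isolated. -/
lemma Xset.isolated (x : Xset) (hx : (x : ℝ) ≠ 0) : IsOpen ({x} : Set Xset) := by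
  rcases x.2 with h | ⟨n, hn, h⟩
  · exact absurd h hx
  have hn0 : (0 : ℝ) < n := by exact_mod_cast hn
  have : ({x} : Set Xset) =
      Subtype.val ⁻¹' Metric.ball ((x : ℝ)) (1 / (n * (n + 1))) := by
    ext y
    simp only [Set.mem_singleton_iff, Set.mem_preimage, Metric.mem_ball,
      Real.dist_eq]
    constructor
    · rintro rfl; simpa using by positivity
    · intro hy
      apply Subtype.ext
      rw [h] at hy ⊢
      exact Xset.sep n hn _ y.2 hy
  rw [this]
  exact Metric.isOpen_ball.preimage continuous_subtype_val

/-- Continuity at an isolated point. -/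
lemma continuousAt_of_isolated {α β : Type*} [TopologicalSpace α] [TopologicalSpace β]
    (f : α → β) (x : α) (h : IsOpen ({x} : Set α)) : ContinuousAt f x := by
  have hmem : {x} ∈ nhds x := h.mem_nhds rfl
  have hle : nhds x ≤ pure x := Filter.le_pure_iff.mpr hmem
  exact (Filter.tendsto_pure_left.mpr fun s hs => mem_of_mem_nhds hs).mono_left hle

theorem no_continuous_factorization
    (f g : Xset → ℝ)
    (hf : ∀ x : Xset, f x = if ∃ n : ℕ, 1 ≤ n ∧ (x : ℝ) = 1 / (2 * n) then (x : ℝ) else 0)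
    (hg : ∀ x : Xset, g x = (x : ℝ)) :
    Continuous f ∧ Continuous g ∧ (∀ x : Xset, (f x) ^ 2 ≤ (g x) ^ 2) ∧
      ¬ ∃ h : Xset → ℂ, Continuous h ∧ ∀ x : Xset, (f x : ℂ) = h x * (g x : ℂ) := by
  have hgcont : Continuous g := by
    have : g = fun x : Xset => (x : ℝ) := funext hg
    rw [this]; exact continuous_subtype_val
  -- f vanishes at 0
  have hf0 : ∀ x : Xset, (x : ℝ) = 0 → f x = 0 := by
    intro x hx
    have hcond : ¬ ∃ n : ℕ, 1 ≤ n ∧ (x : ℝ) = 1 / (2 * n) := by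
      rintro ⟨n, hn, h⟩
      rw [hx] at h
      have hn0 : (0 : ℝ) < n := by exact_mod_cast hn
      have : (0 : ℝ) < 1 / (2 * (n : ℝ)) := by positivity
      rw [← h] at this
      exact lt_irrefl 0 this
    rw [hf, if_neg hcond]
  have hfcont : Continuous f := by
    rw [continuous_iff_continuousAt]
    intro x
    by_cases hx : (x : ℝ) = 0
    · -- squeeze
      have key : Filter.Tendsto f (nhds x) (nhds 0) := by
        apply squeeze_zero_norm (a := fun y : Xset => |(y : ℝ)|)
        · intro y
          rw [hf, Real.norm_eq_abs]
          split_ifs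
          · exact le_refl _
          · simp
        · have : Filter.Tendsto (fun y : Xset => |(y : ℝ)|) (nhds x) (nhds (|(x : ℝ)|)) :=
            (continuous_subtype_val.abs.tendsto x)
          rwa [hx, abs_zero] at this
      unfold ContinuousAt
      rwa [hf0 x hx]
    · exact continuousAt_of_isolated f x (Xset.isolated x hx)
  refine ⟨hfcont, hgcont, ?_, ?_⟩
  · intro x
    rw [hf, hg]
    split_ifs
    · exact le_refl _
    · simpa using sq_nonneg ((x : ℝ))
  · rintro ⟨h, hhcont, hfac⟩
    -- the sequences
    set u : ℕ → Xset := fun n => ⟨1 / ((2 * (n + 1) : ℕ) : ℝ), Xset.inv_mem _ (by omega)⟩ with hu_def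
    set v : ℕ → Xset := fun n => ⟨1 / ((2 * (n + 1) + 1 : ℕ) : ℝ), Xset.inv_mem _ (by omega)⟩ with hv_def
    set x0 : Xset := ⟨0, Xset.zero_mem⟩ with hx0_def
    have hnat : Filter.Tendsto (fun n : ℕ => 1 / (n : ℝ)) Filter.atTop (nhds 0) :=
      tendsto_one_div_atTop_nhds_zero_nat
    have hu : Filter.Tendsto u Filter.atTop (nhds x0) := by
      rw [tendsto_subtype_rng]
      have := hnat.comp (Filter.tendsto_atTop_mono (fun n => by simp; omega)
        (Filter.tendsto_id (α := ℕ)) :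
          Filter.Tendsto (fun n : ℕ => 2 * (n + 1)) Filter.atTop Filter.atTop)
      exact this
    have hv : Filter.Tendsto v Filter.atTop (nhds x0) := by
      rw [tendsto_subtype_rng]
      have := hnat.comp (Filter.tendsto_atTop_mono (fun n => by simp; omega)
        (Filter.tendsto_id (α := ℕ)) :
          Filter.Tendsto (fun n : ℕ => 2 * (n + 1) + 1) Filter.atTop Filter.atTop)
      exact this
    -- values of h along u
    have hu1 : ∀ n, h (u n) = 1 := by
      intro n
      have hval : ((u n : Xset) : ℝ) = 1 / ((2 * (n + 1) : ℕ) : ℝ) := rfl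
      have hne : ((u n : Xset) : ℝ) ≠ 0 := by
        rw [hval]; positivity
      have hfu : f (u n) = ((u n : Xset) : ℝ) := by
        rw [hf, if_pos]
        exact ⟨n + 1, by omega, by rw [hval]; push_cast; ring_nf⟩
      have heq := hfac (u n)
      rw [hfu, hg] at heq
      have hne' : (((u n : Xset) : ℝ) : ℂ) ≠ 0 := by exact_mod_cast hne
      exact mul_right_cancel₀ hne' (by rw [one_mul]; exact heq.symm)
    have hv0 : ∀ n, h (v n) = 0 := by
      intro n
      have hval : ((v n : Xset) : ℝ) = 1 / ((2 * (n + 1) + 1 : ℕ) : ℝ) := rfl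
      have hne : ((v n : Xset) : ℝ) ≠ 0 := by
        rw [hval]; positivity
      have hfv : f (v n) = 0 := by
        rw [hf, if_neg]
        rintro ⟨m, hm, hmeq⟩
        rw [hval] at hmeq
        have hm0 : (0 : ℝ) < m := by exact_mod_cast hm
        have h1 : ((2 * (n + 1) + 1 : ℕ) : ℝ) ≠ 0 := by positivity
        have h2 : (2 : ℝ) * (m : ℝ) ≠ 0 := by positivity
        rw [div_eq_div_iff h1 h2] at hmeq
        simp only [one_mul] at hmeq
        have : (2 * m : ℕ) = 2 * (n + 1) + 1 := by exact_mod_cast hmeq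
        omega
      have heq := hfac (v n)
      rw [hfv, hg] at heq
      have hne' : (((v n : Xset) : ℝ) : ℂ) ≠ 0 := by exact_mod_cast hne
      simp only [Complex.ofReal_zero] at heq
      rcases mul_eq_zero.mp heq.symm with h' | h'
      · exact h'
      · exact absurd h' hne'
    have h1 : h x0 = 1 := by
      have : Filter.Tendsto (fun n => h (u n)) Filter.atTop (nhds (h x0)) :=
        (hhcont.tendsto x0).comp hu
      simp only [hu1] at this
      exact tendsto_nhds_unique this tendsto_const_nhds
    have h0 : h x0 = 0 := by
      have : Filter.Tendsto (fun n => h (v n)) Filter.atTop (nhds (h x0)) :=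
        (hhcont.tendsto x0).comp hv
      simp only [hv0] at this
      exact tendsto_nhds_unique this tendsto_const_nhds
    rw [h1] at h0
    exact one_ne_zero h0
end

section
/- Let X be a locally compact Hausdorff space such that C₀(X) has the weak polar decomposition property: for every f ∈ C₀(X) there exists v ∈ C₀(X) with f = v·|f|. Then for all f, g ∈ C₀(X) with |f|² ≤ |g|² pointwise, there exists h ∈ C₀(X) with f = h·g. -/
open ZeroAtInfty

variable {X : Type*} [TopologicalSpace X] [LocallyCompactSpace X] [T2Space X]

theorem dfp_of_wpdp
    (hwpdp : ∀ f : C₀(X, ℂ), ∃ v : C₀(X, ℂ), ∀ x : X, f x = v x * (‖f x‖ : ℂ)) :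
    ∀ f g : C₀(X, ℂ), (∀ x : X, ‖f x‖ ^ 2 ≤ ‖g x‖ ^ 2) →
      ∃ h : C₀(X, ℂ), ∀ x : X, f x = h x * g x := by
  intro f g hle
  obtain ⟨u, hu⟩ := hwpdp f
  obtain ⟨v, hv⟩ := hwpdp g
  have hcont : Continuous fun x : X =>
      (‖f x‖ : ℂ) +
        Complex.I * (Real.sqrt (‖g x‖ ^ 2 - ‖f x‖ ^ 2) : ℂ) := by
    apply Continuous.add
    · exact Complex.continuous_ofReal.comp (continuous_norm.comp f.continuous)
    · exact continuous_const.mul (Complex.continuous_ofReal.comp (Real.continuous_sqrt.comp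
        (((continuous_norm.comp g.continuous).pow 2).sub
          ((continuous_norm.comp f.continuous).pow 2))))
  have hzero : Filter.Tendsto (fun x : X =>
      (‖f x‖ : ℂ) +
        Complex.I * (Real.sqrt (‖g x‖ ^ 2 - ‖f x‖ ^ 2) : ℂ))
      (Filter.cocompact X) (nhds 0) := by
    have hf : Filter.Tendsto (fun x => f x) (Filter.cocompact X) (nhds 0) := f.zero_at_infty'
    have hg : Filter.Tendsto (fun x => g x) (Filter.cocompact X) (nhds 0) := g.zero_at_infty'
    have h1 : Filter.Tendsto (fun x => (‖f x‖ : ℂ)) (Filter.cocompact X) (nhds 0) := by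
      have := (Complex.continuous_ofReal.comp continuous_norm).tendsto (0 : ℂ)
      simpa [Function.comp_def] using this.comp hf
    have h2 : Filter.Tendsto (fun x =>
        (Real.sqrt (‖g x‖ ^ 2 - ‖f x‖ ^ 2) : ℂ))
        (Filter.cocompact X) (nhds 0) := by
      have hgc : Filter.Tendsto (fun x => ‖g x‖) (Filter.cocompact X) (nhds 0) := by
        simpa [Function.comp_def] using (continuous_norm.tendsto (0 : ℂ)).comp hg
      have hfc : Filter.Tendsto (fun x => ‖f x‖) (Filter.cocompact X) (nhds 0) := by
        simpa [Function.comp_def] using (continuous_norm.tendsto (0 : ℂ)).comp hf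
      have hsub : Filter.Tendsto (fun x => ‖g x‖ ^ 2 - ‖f x‖ ^ 2)
          (Filter.cocompact X) (nhds 0) := by
        simpa using (hgc.pow 2).sub (hfc.pow 2)
      have := (Complex.continuous_ofReal.comp Real.continuous_sqrt).tendsto (0 : ℝ)
      simpa [Function.comp_def] using this.comp hsub
    simpa using (h1.add ((tendsto_const_nhds (x := Complex.I)).mul h2))
  set φ : C₀(X, ℂ) := ⟨⟨fun x =>
      (‖f x‖ : ℂ) +
        Complex.I * (Real.sqrt (‖g x‖ ^ 2 - ‖f x‖ ^ 2) : ℂ), hcont⟩, hzero⟩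
    with hφdef
  have hφabs : ∀ x, ‖φ x‖ = ‖g x‖ := by
    intro x
    have hnn : 0 ≤ ‖g x‖ ^ 2 - ‖f x‖ ^ 2 := sub_nonneg.mpr (hle x)
    have : Complex.normSq (φ x) = ‖g x‖ ^ 2 := by
      simp only [hφdef, ZeroAtInftyContinuousMap.coe_mk, ContinuousMap.coe_mk]
      rw [Complex.normSq_apply]
      simp [Complex.add_re, Complex.add_im, Complex.mul_re, Complex.mul_im,
        Complex.I_re, Complex.I_im, Complex.ofReal_re, Complex.ofReal_im]
      rw [Real.mul_self_sqrt hnn]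
      ring
    rw [Complex.norm_def, this, Real.sqrt_sq (norm_nonneg _)]
  obtain ⟨w, hw⟩ := hwpdp φ
  have key : ∀ x, 2 * (‖f x‖ : ℂ) = (w x + star (w x)) * (‖g x‖ : ℂ) := by
    intro x
    have h1 : φ x = w x * (‖g x‖ : ℂ) := by rw [hw x, hφabs x]
    have h2 : star (φ x) = star (w x) * (‖g x‖ : ℂ) := by
      rw [h1, star_mul']
      simp [Complex.conj_ofReal]
    have h3 : φ x + star (φ x) = 2 * (‖f x‖ : ℂ) := by
      simp only [hφdef, ZeroAtInftyContinuousMap.coe_mk, ContinuousMap.coe_mk]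
      simp [star_add, star_mul', Complex.conj_ofReal, Complex.conj_I]
      ring
    rw [h1] at h3
    simp only [star_mul', Complex.star_def, Complex.conj_ofReal] at h3 ⊢
    linear_combination h3.symm
  refine ⟨u * ((2 : ℂ)⁻¹ • (w + star w)) * star v, fun x => ?_⟩
  simp only [ZeroAtInftyContinuousMap.coe_mul, ZeroAtInftyContinuousMap.coe_smul,
    ZeroAtInftyContinuousMap.coe_add, ZeroAtInftyContinuousMap.coe_star, Pi.mul_apply,
    Pi.smul_apply, Pi.add_apply, Pi.star_apply, smul_eq_mul]
  by_cases hgx : g x = 0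
  · have hf0 : f x = 0 := by
      have hl := hle x
      rw [hgx] at hl
      simp only [norm_zero] at hl
      have h2 : ‖f x‖ = 0 := by nlinarith [norm_nonneg (f x)]
      exact norm_eq_zero.mp h2
    rw [hgx, hf0, mul_zero]
  · have hvx : star (v x) * v x = 1 := by
      have habs : ‖v x‖ = 1 := by
        have := hv x
        have habsg : ‖g x‖ = ‖v x‖ * ‖g x‖ := by
          conv_lhs => rw [this]
          simp [norm_mul, Complex.norm_real, abs_of_nonneg (norm_nonneg (g x))]
        have hgne : ‖g x‖ ≠ 0 := by simpa using hgx
        field_simp at habsg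
        linarith [habsg]
      calc star (v x) * v x = (Complex.normSq (v x) : ℂ) := by
            rw [Complex.star_def, mul_comm, Complex.mul_conj]
          _ = 1 := by rw [Complex.normSq_eq_norm_sq, habs]; norm_num
    calc f x = u x * (‖f x‖ : ℂ) := hu x
      _ = u x * ((2:ℂ)⁻¹ * (2 * (‖f x‖ : ℂ))) := by ring
      _ = u x * ((2:ℂ)⁻¹ * ((w x + star (w x)) * (‖g x‖ : ℂ))) := by rw [key x]
      _ = u x * ((2:ℂ)⁻¹ * (w x + star (w x))) * (star (v x) * (v x * (‖g x‖ : ℂ))) := by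
          rw [← mul_assoc (star (v x)), hvx]; ring
      _ = u x * ((2:ℂ)⁻¹ * (w x + star (w x))) * (star (v x) * g x) := by rw [← hv x]
      _ = u x * ((2:ℂ)⁻¹ * (w x + star (w x))) * star (v x) * g x := by ring
end

section
/- Let X be a locally compact Hausdorff space such that every f ∈ C₀(X) factors as f = v·|f| for some v ∈ C₀(X). Then X is sub-Stonean: any two disjoint open σ-compact subsets of X have disjoint compact closures. -/
open ZeroAtInfty Filter Topology Set

variable {X : Type*} [TopologicalSpace X] [LocallyCompactSpace X] [T2Space X]

/-- Evaluation at a point as a continuous linear map on `C₀(X, ℝ)`. -/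
noncomputable def evalC0 (x : X) : C₀(X, ℝ) →L[ℝ] ℝ :=
  LinearMap.mkContinuous
    { toFun := fun f => f x
      map_add' := fun _ _ => rfl
      map_smul' := fun _ _ => rfl } 1
    (fun f => by
      simpa [ZeroAtInftyContinuousMap.norm_toBCF_eq_norm] using
        f.toBCF.norm_coe_le_norm x)

lemma exists_C0_pos_iff {U : Set X} (hU : IsOpen U) (hσ : IsSigmaCompact U) :
    ∃ f : C₀(X, ℝ), (∀ x, 0 ≤ f x) ∧ (∀ x, 0 < f x ↔ x ∈ U) := by
  obtain ⟨K, hKc, hKU⟩ := hσ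
  have hKsub : ∀ n, K n ⊆ U := fun n => hKU ▸ Set.subset_iUnion K n
  have h1 : ∀ n, ∃ f : C(X, ℝ), Set.EqOn f 1 (K n) ∧ Set.EqOn f 0 Uᶜ ∧ HasCompactSupport f ∧
      ∀ x, f x ∈ Set.Icc (0:ℝ) 1 := fun n =>
    exists_continuous_one_zero_of_isCompact (hKc n) hU.isClosed_compl
      (disjoint_compl_right.mono_left (hKsub n))
  choose fn hone hzero hcs hicc using h1
  let g : ℕ → C₀(X, ℝ) := fun n => ⟨fn n, (hcs n).is_zero_at_infty⟩
  have hg_norm : ∀ n, ‖g n‖ ≤ 1 := by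
    intro n
    rw [← ZeroAtInftyContinuousMap.norm_toBCF_eq_norm]
    refine (BoundedContinuousFunction.norm_le zero_le_one).mpr fun x => ?_
    show ‖fn n x‖ ≤ 1
    rw [Real.norm_eq_abs, abs_le]
    exact ⟨by linarith [(hicc n x).1], (hicc n x).2⟩
  have hsum : Summable (fun n => ((1:ℝ)/2)^(n+1) • g n) := by
    refine Summable.of_norm_bounded (g := fun n => ((1:ℝ)/2)^n)
      (summable_geometric_of_lt_one (by norm_num) (by norm_num)) fun n => ?_
    have h1 : ‖((1:ℝ)/2)^(n+1) • g n‖ = ‖((1:ℝ)/2)^(n+1)‖ * ‖g n‖ := by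
      exact norm_smul (β := C₀(X, ℝ)) (((1:ℝ)/2)^(n+1)) (g n)
    rw [h1, Real.norm_eq_abs, abs_of_nonneg (by positivity), pow_succ]
    nlinarith [norm_nonneg (g n), pow_nonneg (by norm_num : (0:ℝ) ≤ 1/2) n, hg_norm n]
  set F : C₀(X, ℝ) := ∑' n, ((1:ℝ)/2)^(n+1) • g n with hFdef
  have hFx : ∀ x, HasSum (fun n => ((1:ℝ)/2)^(n+1) * fn n x) (F x) := by
    intro x
    have h2 := (evalC0 x).hasSum hsum.hasSum
    have h3 : (fun n => evalC0 x (((1:ℝ)/2)^(n+1) • g n)) =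
        (fun n => ((1:ℝ)/2)^(n+1) * fn n x) := by
      funext n
      show (((1:ℝ)/2)^(n+1) • g n) x = _
      rw [ZeroAtInftyContinuousMap.smul_apply, smul_eq_mul]
      rfl
    rwa [h3] at h2
  refine ⟨F, fun x => (hFx x).nonneg fun n => by
    have := (hicc n x).1; positivity, fun x => ?_⟩
  constructor
  · intro hx
    by_contra hxU
    have hz : ∀ n, ((1:ℝ)/2)^(n+1) * fn n x = 0 := fun n => by
      rw [hzero n hxU, Pi.zero_apply, mul_zero]
    have hzs : HasSum (fun n => ((1:ℝ)/2)^(n+1) * fn n x) 0 := by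
      have he : (fun n => ((1:ℝ)/2)^(n+1) * fn n x) = fun _ => (0:ℝ) := funext hz
      rw [he]; exact hasSum_zero
    have h0 := (hFx x).unique hzs
    rw [h0] at hx
    exact lt_irrefl 0 hx
  · intro hx
    obtain ⟨n, hn⟩ : ∃ n, x ∈ K n := Set.mem_iUnion.mp (hKU ▸ hx)
    have hle := le_hasSum (hFx x) n fun j _ => by
      have := (hicc j x).1; positivity
    rw [hone n hn, Pi.one_apply, mul_one] at hle
    calc (0:ℝ) < ((1:ℝ)/2)^(n+1) := by positivity
      _ ≤ _ := hle

theorem subStonean_of_wpdp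
    (hwpdp : ∀ f : C₀(X, ℂ), ∃ v : C₀(X, ℂ), ∀ x : X, f x = v x * (‖f x‖ : ℂ)) :
    ∀ U V : Set X, IsOpen U → IsOpen V → IsSigmaCompact U → IsSigmaCompact V →
      Disjoint U V →
      IsCompact (closure U) ∧ IsCompact (closure V) ∧ Disjoint (closure U) (closure V) := by
  intro U V hUo hVo hUσ hVσ hdisj
  obtain ⟨f, hf0, hfpos⟩ := exists_C0_pos_iff hUo hUσ
  obtain ⟨g, hg0, hgpos⟩ := exists_C0_pos_iff hVo hVσ
  -- the complex-valued function f - g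
  let h : C₀(X, ℂ) :=
    { toFun := fun x => ((f x - g x : ℝ) : ℂ)
      continuous_toFun := Complex.continuous_ofReal.comp
        ((map_continuous f).sub (map_continuous g))
      zero_at_infty' := by
        have h1 : Tendsto (fun x => f x - g x) (cocompact X) (𝓝 0) := by
          simpa using (zero_at_infty f).sub (zero_at_infty g)
        have h2 := (Complex.continuous_ofReal.tendsto 0).comp h1
        simpa [Function.comp_def] using h2 }
  obtain ⟨v, hv⟩ := hwpdp h
  have hgU : ∀ x ∈ U, g x = 0 := by
    intro x hx
    have hnv : x ∉ V := Set.disjoint_left.mp hdisj hx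
    have h2 : ¬ 0 < g x := fun hpos => hnv ((hgpos x).mp hpos)
    linarith [hg0 x]
  have hfV : ∀ x ∈ V, f x = 0 := by
    intro x hx
    have hnu : x ∉ U := Set.disjoint_right.mp hdisj hx
    have h2 : ¬ 0 < f x := fun hpos => hnu ((hfpos x).mp hpos)
    linarith [hf0 x]
  have hvU : ∀ x ∈ U, v x = 1 := by
    intro x hx
    have hfx : (0:ℝ) < f x := (hfpos x).mpr hx
    have hhx : h x = (f x : ℂ) := by simp [h, hgU x hx]
    have heq := hv x
    rw [hhx] at heq
    have habs : (‖(f x : ℂ)‖ : ℂ) = (f x : ℂ) := by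
      rw [Complex.norm_real, Real.norm_eq_abs, abs_of_pos hfx]
    rw [habs] at heq
    have hne : (f x : ℂ) ≠ 0 := by exact_mod_cast hfx.ne'
    have : v x * (f x : ℂ) = 1 * (f x : ℂ) := by rw [← heq]; ring
    exact mul_right_cancel₀ hne this
  have hvV : ∀ x ∈ V, v x = -1 := by
    intro x hx
    have hgx : (0:ℝ) < g x := (hgpos x).mpr hx
    have hhx : h x = -(g x : ℂ) := by simp [h, hfV x hx]
    have heq := hv x
    rw [hhx] at heq
    have habs : (‖-(g x : ℂ)‖ : ℂ) = (g x : ℂ) := by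
      rw [norm_neg, Complex.norm_real, Real.norm_eq_abs, abs_of_pos hgx]
    rw [habs] at heq
    have hne : (g x : ℂ) ≠ 0 := by exact_mod_cast hgx.ne'
    have : v x * (g x : ℂ) = -1 * (g x : ℂ) := by rw [← heq]; ring
    exact mul_right_cancel₀ hne this
  have hclU : closure U ⊆ {x | v x = 1} :=
    closure_minimal (fun x hx => hvU x hx)
      (isClosed_eq (map_continuous v) continuous_const)
  have hclV : closure V ⊆ {x | v x = -1} :=
    closure_minimal (fun x hx => hvV x hx)
      (isClosed_eq (map_continuous v) continuous_const)
  obtain ⟨t, htc, hts⟩ : ∃ t : Set X, IsCompact t ∧ tᶜ ⊆ {x | dist (v x) 0 < 1} := by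
    have hev := Metric.tendsto_nhds.mp (zero_at_infty v) 1 one_pos
    rw [Filter.eventually_iff, mem_cocompact'] at hev
    obtain ⟨t, htc, hts⟩ := hev
    exact ⟨t, htc, Set.compl_subset_comm.mpr hts⟩
  have hUt : closure U ⊆ t := by
    intro x hx
    by_contra hxt
    have h2 := hts hxt
    have h1 : v x = 1 := hclU hx
    simp only [Set.mem_setOf_eq, dist_zero_right, h1] at h2
    norm_num at h2
  have hVt : closure V ⊆ t := by
    intro x hx
    by_contra hxt
    have h2 := hts hxt
    have h1 : v x = -1 := hclV hx
    simp only [Set.mem_setOf_eq, dist_zero_right, h1] at h2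
    norm_num at h2
  refine ⟨htc.of_isClosed_subset isClosed_closure hUt,
    htc.of_isClosed_subset isClosed_closure hVt, ?_⟩
  refine Set.disjoint_left.mpr fun x hxU hxV => ?_
  have h1 : v x = 1 := hclU hxU
  have h2 : v x = -1 := hclV hxV
  rw [h1] at h2
  norm_num at h2
end

section
/- Let R be a von Neumann algebra with identity I and let T₁, …, Tₙ ∈ R satisfy T₁*T₁ + ⋯ + Tₙ*Tₙ = I. Then there exist S₁, …, S_{n−1} ∈ R with Tᵢ = Sᵢ·√(I − Tₙ*Tₙ) for 1 ≤ i ≤ n−1, and S₁*S₁ + ⋯ + S_{n−1}*S_{n−1} equals the range projection of √(I − Tₙ*Tₙ). -/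
open ContinuousLinearMap

set_option synthInstance.maxHeartbeats 1000000
set_option maxHeartbeats 1000000

local notation "⟪" x ", " y "⟫" => @inner ℂ _ _ x y

variable {H : Type*} [NormedAddCommGroup H] [InnerProductSpace ℂ H] [CompleteSpace H]

lemma aux_isClosed_centralizer (s : Set (H →L[ℂ] H)) : IsClosed (Set.centralizer s) := by
  have h : Set.centralizer s = ⋂ m ∈ s, {x : H →L[ℂ] H | m * x = x * m} := by
    ext x; simp [Set.mem_centralizer_iff]
  rw [h]
  exact isClosed_biInter fun m _ => isClosed_eq (continuous_mul_left m) (continuous_mul_right m)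

lemma aux_cfc_mem_elemental (a : H →L[ℂ] H) (f : ℂ → ℂ) :
    cfc f a ∈ StarAlgebra.elemental ℂ a := by
  refine cfc_cases (fun x => x ∈ StarAlgebra.elemental ℂ a) a f (zero_mem _) ?_
  intro hf ha
  rw [cfcHom_eq_of_isStarNormal (ha := ha)]
  exact SetLike.coe_mem _

lemma aux_commute_cfc (a z : H →L[ℂ] H) (f : ℂ → ℂ)
    (h1 : z * a = a * z) (h2 : star z * a = a * star z) :
    z * cfc f a = cfc f a * z := by
  have hmem : a ∈ StarSubalgebra.centralizer ℂ ({z} : Set (H →L[ℂ] H)) := by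
    rw [StarSubalgebra.mem_centralizer_iff]
    rintro g hg
    rw [Set.mem_singleton_iff] at hg
    subst hg
    exact ⟨h1, h2⟩
  have hclosed : IsClosed ((StarSubalgebra.centralizer ℂ ({z} : Set (H →L[ℂ] H)) :
      StarSubalgebra ℂ (H →L[ℂ] H)) : Set (H →L[ℂ] H)) := by
    rw [StarSubalgebra.coe_centralizer]
    exact aux_isClosed_centralizer _
  have hle := StarAlgebra.elemental.le_of_mem (R := ℂ) hclosed hmem
  have hc := hle (aux_cfc_mem_elemental a f)
  rw [StarSubalgebra.mem_centralizer_iff] at hc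
  exact (hc z rfl).1

lemma aux_sqrt_eq_cfc (a : H →L[ℂ] H) (ha : 0 ≤ a) :
    CFC.sqrt a = cfc (fun x : ℂ => ((NNReal.sqrt (Complex.re x).toNNReal : ℝ) : ℂ)) a := by
  have hsa : IsSelfAdjoint a := IsSelfAdjoint.of_nonneg ha
  have hcont : Continuous (fun x : ℂ => ((NNReal.sqrt (Complex.re x).toNNReal : ℝ) : ℂ)) := by
    exact Complex.continuous_ofReal.comp (NNReal.continuous_coe.comp
      ((NNReal.continuous_sqrt).comp (continuous_real_toNNReal.comp Complex.continuous_re)))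
  rw [show CFC.sqrt a = cfcₙ NNReal.sqrt a from rfl,
    cfcₙ_nnreal_eq_real NNReal.sqrt a ha,
    cfcₙ_real_eq_complex _ hsa,
    cfcₙ_eq_cfc (hf := hcont.continuousOn) (hf0 := by simp)]

lemma aux_exists_factor (B T : H →L[ℂ] H) (h : ∀ x, ‖T x‖ ≤ ‖B x‖) :
    ∃ S : H →L[ℂ] H, (∀ x, S (B x) = T x) ∧ ∀ y ∈ (LinearMap.range (B : H →ₗ[ℂ] H))ᗮ, S y = 0 := by
  classical
  set Bl := (B : H →ₗ[ℂ] H) with hBl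
  have hker : LinearMap.ker Bl ≤ LinearMap.ker (T : H →ₗ[ℂ] H) := by
    intro x hx
    have hx' : B x = 0 := hx
    have hTx := h x
    rw [hx', norm_zero] at hTx
    exact le_antisymm hTx (norm_nonneg _) |> norm_eq_zero.mp
  let s₀ : LinearMap.range Bl →ₗ[ℂ] H :=
    ((LinearMap.ker Bl).liftQ (T : H →ₗ[ℂ] H) hker).comp
      (Bl.quotKerEquivRange.symm : LinearMap.range Bl →ₗ[ℂ] H ⧸ LinearMap.ker Bl)
  have hs₀ : ∀ x : H, s₀ ⟨Bl x, LinearMap.mem_range_self _ x⟩ = T x := by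
    intro x
    show ((LinearMap.ker Bl).liftQ (T : H →ₗ[ℂ] H) hker)
      (Bl.quotKerEquivRange.symm ⟨Bl x, LinearMap.mem_range_self _ x⟩) = T x
    rw [LinearMap.quotKerEquivRange_symm_apply_image]
    exact Submodule.liftQ_apply _ _ _
  have hbound : ∀ y : LinearMap.range Bl, ‖s₀ y‖ ≤ 1 * ‖y‖ := by
    rintro ⟨v, x, rfl⟩
    rw [one_mul]
    calc ‖s₀ ⟨Bl x, LinearMap.mem_range_self _ x⟩‖ = ‖T x‖ := by rw [hs₀]
    _ ≤ ‖B x‖ := h x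
    _ = ‖(⟨Bl x, LinearMap.mem_range_self _ x⟩ : LinearMap.range Bl)‖ := rfl
  let s₁ : LinearMap.range Bl →L[ℂ] H := s₀.mkContinuous 1 hbound
  set K : Submodule ℂ H := (LinearMap.range Bl).topologicalClosure with hK
  haveI : CompleteSpace K := (LinearMap.range Bl).isClosed_topologicalClosure.completeSpace_coe
  let el : LinearMap.range Bl →ₗ[ℂ] K :=
    Submodule.inclusion (Submodule.le_topologicalClosure _)
  let e : LinearMap.range Bl →L[ℂ] K := el.mkContinuous 1 (fun y => by
    rw [one_mul]; exact le_of_eq rfl)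
  have he : IsUniformInducing e := by
    have : Isometry e := Isometry.of_dist_eq fun x y => rfl
    exact this.isUniformInducing
  have hd : DenseRange e := by
    intro k
    rw [closure_subtype]
    have himg : ((↑) '' Set.range e : Set H) = (LinearMap.range Bl : Set H) := by
      ext v
      constructor
      · rintro ⟨w, ⟨y, rfl⟩, rfl⟩
        exact y.2
      · intro hv
        exact ⟨e ⟨v, hv⟩, ⟨⟨v, hv⟩, rfl⟩, rfl⟩
    rw [himg, ← Submodule.topologicalClosure_coe]
    exact k.2
  let sb : K →L[ℂ] H := s₁.extend e
  have horth : (LinearMap.range Bl)ᗮ ≤ Kᗮ := by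
    rw [hK, ← Submodule.orthogonal_orthogonal_eq_closure]
    exact Submodule.le_orthogonal_orthogonal _
  refine ⟨sb.comp (K.orthogonalProjectionOnto : H →L[ℂ] K), ?_, ?_⟩
  · intro x
    have hBx : B x ∈ K := Submodule.le_topologicalClosure _ (LinearMap.mem_range_self Bl x)
    have hproj : K.orthogonalProjectionOnto (B x) = ⟨B x, hBx⟩ :=
      Submodule.orthogonalProjectionOnto_mem_subspace_eq_self (⟨B x, hBx⟩ : K)
    have hek : (⟨B x, hBx⟩ : K) = e ⟨Bl x, LinearMap.mem_range_self _ x⟩ := Subtype.ext rfl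
    show sb (K.orthogonalProjectionOnto (B x)) = T x
    rw [hproj, hek]
    show (s₁.extend e) (e _) = T x
    rw [ContinuousLinearMap.extend_eq (h_dense := hd) (h_e := he)]
    exact hs₀ x
  · intro y hy
    have hy' : y ∈ Kᗮ := horth hy
    show sb (K.orthogonalProjectionOnto y) = 0
    rw [Submodule.orthogonalProjectionOnto_apply_of_mem_orthogonal hy', map_zero]

lemma aux_orth_eq (B : H →L[ℂ] H) :
    ((LinearMap.range (B : H →ₗ[ℂ] H)).topologicalClosure)ᗮ = (LinearMap.range (B : H →ₗ[ℂ] H))ᗮ := by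
  refine le_antisymm (Submodule.orthogonal_le (Submodule.le_topologicalClosure _)) ?_
  rw [← Submodule.orthogonal_orthogonal_eq_closure]
  exact Submodule.le_orthogonal_orthogonal _

lemma aux_ext (B f g : H →L[ℂ] H) (h1 : ∀ x, f (B x) = g (B x))
    (h2 : ∀ y ∈ (LinearMap.range (B : H →ₗ[ℂ] H))ᗮ, f y = g y) : f = g := by
  set K := (LinearMap.range (B : H →ₗ[ℂ] H)).topologicalClosure with hK
  haveI : CompleteSpace K := (LinearMap.range (B : H →ₗ[ℂ] H)).isClosed_topologicalClosure.completeSpace_coe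
  have hKset : ∀ k ∈ K, f k = g k := by
    intro k hk
    have hcl : IsClosed {x : H | f x = g x} := isClosed_eq f.continuous g.continuous
    have hsub : (LinearMap.range (B : H →ₗ[ℂ] H) : Set H) ⊆ {x | f x = g x} := by
      rintro v ⟨x, rfl⟩
      exact h1 x
    have := closure_minimal hsub hcl
    rw [← Submodule.topologicalClosure_coe] at this
    exact this hk
  ext x
  have hmem : x - (K.orthogonalProjectionOnto x : H) ∈ (LinearMap.range (B : H →ₗ[ℂ] H))ᗮ :=
    aux_orth_eq B ▸ Submodule.sub_starProjection_mem_orthogonal (K := K) x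
  have hdec : x = (K.orthogonalProjectionOnto x : H) + (x - (K.orthogonalProjectionOnto x : H)) := by abel
  calc f x = f ((K.orthogonalProjectionOnto x : H) + (x - (K.orthogonalProjectionOnto x : H))) := by
        rw [← hdec]
    _ = f (K.orthogonalProjectionOnto x : H) + f (x - (K.orthogonalProjectionOnto x : H)) := map_add _ _ _
    _ = g (K.orthogonalProjectionOnto x : H) + g (x - (K.orthogonalProjectionOnto x : H)) := by
        rw [hKset _ (SetLike.coe_mem _), h2 _ hmem]
    _ = g x := by rw [← map_add, ← hdec]

lemma aux_inner_ext (B : H →L[ℂ] H) (v w : H) (h1 : ∀ y, ⟪v, B y⟫ = ⟪w, B y⟫)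
    (h2 : ∀ u ∈ (LinearMap.range (B : H →ₗ[ℂ] H))ᗮ, ⟪v, u⟫ = ⟪w, u⟫) : v = w := by
  set K := (LinearMap.range (B : H →ₗ[ℂ] H)).topologicalClosure with hK
  haveI : CompleteSpace K := (LinearMap.range (B : H →ₗ[ℂ] H)).isClosed_topologicalClosure.completeSpace_coe
  have hKset : ∀ k ∈ K, ⟪v, k⟫ = ⟪w, k⟫ := by
    intro k hk
    have hcl : IsClosed {u : H | ⟪v, u⟫ = ⟪w, u⟫} :=
      isClosed_eq (continuous_const.inner continuous_id) (continuous_const.inner continuous_id)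
    have hsub : (LinearMap.range (B : H →ₗ[ℂ] H) : Set H) ⊆ {u | ⟪v, u⟫ = ⟪w, u⟫} := by
      rintro u ⟨x, rfl⟩
      exact h1 x
    have := closure_minimal hsub hcl
    rw [← Submodule.topologicalClosure_coe] at this
    exact this hk
  apply ext_inner_left ℂ
  intro u
  have hmem : u - (K.orthogonalProjectionOnto u : H) ∈ (LinearMap.range (B : H →ₗ[ℂ] H))ᗮ :=
    aux_orth_eq B ▸ Submodule.sub_starProjection_mem_orthogonal (K := K) u
  have hdec : u = (K.orthogonalProjectionOnto u : H) + (u - (K.orthogonalProjectionOnto u : H)) := by abel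
  have key : ⟪v, u⟫ = ⟪w, u⟫ := by
    calc ⟪v, u⟫
        = ⟪v, (K.orthogonalProjectionOnto u : H) + (u - (K.orthogonalProjectionOnto u : H))⟫ := by
          rw [← hdec]
      _ = ⟪v, (K.orthogonalProjectionOnto u : H)⟫ + ⟪v, u - (K.orthogonalProjectionOnto u : H)⟫ :=
          inner_add_right _ _ _
      _ = ⟪w, (K.orthogonalProjectionOnto u : H)⟫ + ⟪w, u - (K.orthogonalProjectionOnto u : H)⟫ := by
          rw [hKset _ (SetLike.coe_mem _), h2 _ hmem]
      _ = ⟪w, u⟫ := by rw [← inner_add_right, ← hdec]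
  rw [← inner_conj_symm, key, inner_conj_symm]

theorem partition_of_unity_factorization (R : VonNeumannAlgebra H) (n : ℕ)
    (T : Fin (n + 1) → H →L[ℂ] H) (hT : ∀ i, T i ∈ R)
    (hsum : ∑ i, adjoint (T i) * T i = 1) :
    ∃ S : Fin n → H →L[ℂ] H, (∀ i, S i ∈ R) ∧
      (∀ i : Fin n,
        T i.castSucc = S i * CFC.sqrt (1 - adjoint (T (Fin.last n)) * T (Fin.last n))) ∧
      IsIdempotentElem (∑ i, adjoint (S i) * S i) ∧
      IsSelfAdjoint (∑ i, adjoint (S i) * S i) ∧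
      LinearMap.range ((∑ i, adjoint (S i) * S i : H →L[ℂ] H) : H →ₗ[ℂ] H) =
        (LinearMap.range
          ((CFC.sqrt (1 - adjoint (T (Fin.last n)) * T (Fin.last n)) : H →L[ℂ] H) : H →ₗ[ℂ] H)).topologicalClosure := by
  classical
  have hsum' := hsum
  rw [Fin.sum_univ_castSucc] at hsum'
  set A : H →L[ℂ] H := 1 - adjoint (T (Fin.last n)) * T (Fin.last n) with hA
  have hA_sum : A = ∑ i : Fin n, adjoint (T (Fin.castSucc i)) * T (Fin.castSucc i) := by
    rw [hA, ← hsum', add_sub_cancel_right]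
  have hA_mem : A ∈ R := by
    refine sub_mem (one_mem R) (mul_mem ?_ (hT _))
    rw [← star_eq_adjoint]
    exact star_mem (hT _)
  have hA_nonneg : 0 ≤ A := by
    rw [hA_sum]
    refine Finset.sum_nonneg fun i _ => ?_
    rw [← star_eq_adjoint]
    exact star_mul_self_nonneg _
  set B : H →L[ℂ] H := CFC.sqrt A with hBdef
  have hBnn : 0 ≤ B := CFC.sqrt_nonneg A
  have hBsa : IsSelfAdjoint B := IsSelfAdjoint.of_nonneg hBnn
  have hBadj : adjoint B = B := by rw [← star_eq_adjoint]; exact hBsa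
  have hBB : B * B = A := CFC.sqrt_mul_sqrt_self A hA_nonneg
  have hinner : ∀ x y : H,
      ⟪B x, B y⟫ = ∑ i : Fin n, ⟪T (Fin.castSucc i) x, T (Fin.castSucc i) y⟫ := by
    intro x y
    calc ⟪B x, B y⟫ = ⟪adjoint B x, B y⟫ := by rw [hBadj]
      _ = ⟪x, B (B y)⟫ := adjoint_inner_left B (B y) x
      _ = ⟪x, A y⟫ := by rw [← ContinuousLinearMap.mul_apply, hBB]
      _ = ⟪x, (∑ i : Fin n, adjoint (T (Fin.castSucc i)) * T (Fin.castSucc i)) y⟫ := by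
          rw [← hA_sum]
      _ = ∑ i : Fin n, ⟪x, (adjoint (T (Fin.castSucc i)) * T (Fin.castSucc i)) y⟫ := by
          rw [ContinuousLinearMap.sum_apply, inner_sum]
      _ = ∑ i : Fin n, ⟪T (Fin.castSucc i) x, T (Fin.castSucc i) y⟫ := by
          refine Finset.sum_congr rfl fun i _ => ?_
          rw [ContinuousLinearMap.mul_apply, adjoint_inner_right]
  have hTB : ∀ (i : Fin n) (x : H), ‖T (Fin.castSucc i) x‖ ≤ ‖B x‖ := by
    intro i x
    have hsq : ‖B x‖ ^ 2 = ∑ j : Fin n, ‖T (Fin.castSucc j) x‖ ^ 2 := by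
      have h := hinner x x
      rw [inner_self_eq_norm_sq_to_K] at h
      have h2 : ∑ j : Fin n, ⟪T (Fin.castSucc j) x, T (Fin.castSucc j) x⟫
          = ∑ j : Fin n, ((‖T (Fin.castSucc j) x‖ : ℂ)) ^ 2 :=
        Finset.sum_congr rfl fun j _ => inner_self_eq_norm_sq_to_K _
      rw [h2] at h
      have h3 : ((‖B x‖ ^ 2 : ℝ) : ℂ) = ((∑ j : Fin n, ‖T (Fin.castSucc j) x‖ ^ 2 : ℝ) : ℂ) := by
        push_cast
        exact h
      exact_mod_cast h3
    have hle : ‖T (Fin.castSucc i) x‖ ^ 2 ≤ ‖B x‖ ^ 2 := by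
      rw [hsq]
      exact Finset.single_le_sum (f := fun j => ‖T (Fin.castSucc j) x‖ ^ 2)
        (fun j _ => sq_nonneg _) (Finset.mem_univ i)
    have := Real.sqrt_le_sqrt hle
    rwa [Real.sqrt_sq (norm_nonneg _), Real.sqrt_sq (norm_nonneg _)] at this
  have hex : ∀ i : Fin n, ∃ S : H →L[ℂ] H,
      (∀ x, S (B x) = T (Fin.castSucc i) x) ∧ ∀ y ∈ (LinearMap.range (B : H →ₗ[ℂ] H))ᗮ, S y = 0 :=
    fun i => aux_exists_factor B _ (hTB i)
  choose S hS1 hS2 using hex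
  have hzB : ∀ z ∈ R.commutant, z * B = B * z := by
    intro z hz
    have hz' := VonNeumannAlgebra.mem_commutant_iff.mp hz
    have hzs := VonNeumannAlgebra.mem_commutant_iff.mp (star_mem hz)
    rw [hBdef, aux_sqrt_eq_cfc A hA_nonneg]
    exact aux_commute_cfc A z _ (hz' A hA_mem).symm (hzs A hA_mem).symm
  have hmemS : ∀ i, S i ∈ R := by
    intro i
    rw [← VonNeumannAlgebra.commutant_commutant R, VonNeumannAlgebra.mem_commutant_iff]
    intro z hz
    have hz' := VonNeumannAlgebra.mem_commutant_iff.mp hz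
    have hzs := VonNeumannAlgebra.mem_commutant_iff.mp (star_mem hz)
    have hzT : z * T (Fin.castSucc i) = T (Fin.castSucc i) * z := (hz' _ (hT _)).symm
    have hzB' : z * B = B * z := hzB z hz
    have hzsB : star z * B = B * star z := hzB _ (star_mem hz)
    refine aux_ext B _ _ ?_ ?_
    · intro x
      have e1 : (z * S i) (B x) = z (T (Fin.castSucc i) x) := by
        rw [ContinuousLinearMap.mul_apply, hS1]
      have e2 : (S i * z) (B x) = z (T (Fin.castSucc i) x) := by
        rw [ContinuousLinearMap.mul_apply]
        have : z (B x) = B (z x) := by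
          rw [← ContinuousLinearMap.mul_apply, hzB', ContinuousLinearMap.mul_apply]
        rw [this, hS1, ← ContinuousLinearMap.mul_apply, ← hzT, ContinuousLinearMap.mul_apply]
      rw [e1, e2]
    · intro y hy
      have hzy : z y ∈ (LinearMap.range (B : H →ₗ[ℂ] H))ᗮ := by
        rw [Submodule.mem_orthogonal]
        rintro u ⟨x, rfl⟩
        have hz2 : adjoint z (B x) = B (adjoint z x) := by
          rw [← star_eq_adjoint, ← ContinuousLinearMap.mul_apply, hzsB,
            ContinuousLinearMap.mul_apply]
        calc ⟪B x, z y⟫ = ⟪adjoint z (B x), y⟫ := (adjoint_inner_left z y (B x)).symm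
          _ = ⟪B (adjoint z x), y⟫ := by rw [hz2]
          _ = 0 := (Submodule.mem_orthogonal _ _).mp hy _ (LinearMap.mem_range_self _ _)
      rw [ContinuousLinearMap.mul_apply, ContinuousLinearMap.mul_apply, hS2 i y hy, map_zero,
        hS2 i _ hzy]
  set K : Submodule ℂ H := (LinearMap.range (B : H →ₗ[ℂ] H)).topologicalClosure with hKdef
  haveI : CompleteSpace K := (LinearMap.range (B : H →ₗ[ℂ] H)).isClosed_topologicalClosure.completeSpace_coe
  set P : H →L[ℂ] H := K.subtypeL ∘L (K.orthogonalProjectionOnto) with hPdef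
  have hPmemK : ∀ x : H, P x ∈ K := fun x => SetLike.coe_mem _
  have hPid : ∀ x : H, x ∈ K → P x = x := by
    intro x hx
    show (K.orthogonalProjectionOnto x : H) = x
    exact Submodule.starProjection_eq_self_iff.mpr hx
  have hPzero : ∀ y ∈ (LinearMap.range (B : H →ₗ[ℂ] H))ᗮ, P y = 0 := by
    intro y hy
    have hy' : y ∈ Kᗮ := (aux_orth_eq B).symm ▸ hy
    show (K.orthogonalProjectionOnto y : H) = 0
    rw [Submodule.orthogonalProjectionOnto_apply_of_mem_orthogonal hy']
    rfl
  have hQP : ∑ i : Fin n, adjoint (S i) * S i = P := by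
    refine aux_ext B _ _ ?_ ?_
    · intro x
      have hBx : B x ∈ K := Submodule.le_topologicalClosure _ (LinearMap.mem_range_self _ x)
      rw [hPid _ hBx]
      refine aux_inner_ext B _ _ ?_ ?_
      · intro y
        calc ⟪(∑ i : Fin n, adjoint (S i) * S i) (B x), B y⟫
            = ∑ i : Fin n, ⟪adjoint (S i) (S i (B x)), B y⟫ := by
              rw [ContinuousLinearMap.sum_apply, sum_inner]
              exact Finset.sum_congr rfl fun i _ => by rw [ContinuousLinearMap.mul_apply]
          _ = ∑ i : Fin n, ⟪S i (B x), S i (B y)⟫ :=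
              Finset.sum_congr rfl fun i _ => adjoint_inner_left (S i) (B y) _
          _ = ∑ i : Fin n, ⟪T (Fin.castSucc i) x, T (Fin.castSucc i) y⟫ :=
              Finset.sum_congr rfl fun i _ => by rw [hS1, hS1]
          _ = ⟪B x, B y⟫ := (hinner x y).symm
      · intro u hu
        calc ⟪(∑ i : Fin n, adjoint (S i) * S i) (B x), u⟫
            = ∑ i : Fin n, ⟪S i (B x), S i u⟫ := by
              rw [ContinuousLinearMap.sum_apply, sum_inner]
              exact Finset.sum_congr rfl fun i _ => by
                rw [ContinuousLinearMap.mul_apply]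
                exact adjoint_inner_left (S i) u _
          _ = 0 := by
              refine Finset.sum_eq_zero fun i _ => ?_
              rw [hS2 i u hu, inner_zero_right]
          _ = ⟪B x, u⟫ := by
              exact ((Submodule.mem_orthogonal _ _).mp hu _ (LinearMap.mem_range_self _ x)).symm
    · intro y hy
      rw [hPzero y hy, ContinuousLinearMap.sum_apply]
      refine Finset.sum_eq_zero fun i _ => ?_
      rw [ContinuousLinearMap.mul_apply, hS2 i y hy, map_zero]
  refine ⟨S, hmemS, ?_, ?_, ?_, ?_⟩
  · intro i
    exact ContinuousLinearMap.ext fun x => (hS1 i x).symm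
  · rw [hQP]
    show P * P = P
    refine ContinuousLinearMap.ext fun x => ?_
    rw [ContinuousLinearMap.mul_apply, hPid _ (hPmemK x)]
  · rw [hQP]
    exact isSelfAdjoint_starProjection K
  · rw [hQP]
    refine le_antisymm ?_ ?_
    · rintro v ⟨x, rfl⟩
      exact hPmemK x
    · intro v hv
      exact ⟨v, hPid v hv⟩
end
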